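/- Let Ω_i ⊆ ℝ^{n_i} be nonempty closed convex sets with Ω = ∏_{i=1}^N Ω_i ⊆ ℝ^n (n = Σ n_i), F : ℝ^n → ℝ^n a map, A_i ∈ ℝ^{m×n_i}, A = [A_1, …, A_N] ∈ ℝ^{m×n}, b_i ∈ ℝ^m, b = Σ_i b_i, b̄ = col(b_1,…,b_N). Let L ∈ ℝ^{N×N} be symmetric positive semidefinite with L·1_N = 0 and kernel exactly span{1_N}, and set L̄ = L ⊗ I_m, Λ = diag(A_1, …, A_N) ∈ ℝ^{mN×n}. Define Ā(x, z̄, λ̄) = (F(x), 0, L̄λ̄ − b̄) and B̄(x, z̄, λ̄) = N_Ω(x) × {0} × N_{(ℝ₊^m)^N}(λ̄) + (−Λᵀλ̄, −L̄λ̄, Λx + L̄z̄). If 0 ∈ Ā(x*, z̄*, λ̄*) + B̄(x*, z̄*, λ̄*), then there exists λ* ∈ ℝ^m such that λ̄* = 1_N ⊗ λ* (all local multipliers are equal), 0 ∈ F(x*) − Aᵀλ* + N_Ω(x*), and 0 ∈ Ax* − b + N_{ℝ₊^m}(λ*). -/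

import Mathlib

open scoped RealInnerProductSpace Pointwise Matrix

noncomputable section

/-- The normal cone of a set `Ω` at a point `x` (empty when `x ∉ Ω`). -/
def normalCone {E : Type*} [NormedAddCommGroup E] [InnerProductSpace ℝ E]
    (Ω : Set E) (x : E) : Set E :=
  {v | x ∈ Ω ∧ ∀ y ∈ Ω, ⟪v, y - x⟫ ≤ 0}

/-- Any zero of `Ā + B̄` yields consensus of the local multipliers
(`λ̄* = 1_N ⊗ λ*`) and a pair `(x*, λ*)` satisfying the KKT conditions of `VI(F, X)`. -/
theorem zero_of_augmented_operators_gives_KKT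
    (N m : ℕ) (n : Fin N → ℕ)
    (Ω : ∀ i : Fin N, Set (EuclideanSpace ℝ (Fin (n i))))
    (hΩne : ∀ i, (Ω i).Nonempty) (hΩcl : ∀ i, IsClosed (Ω i)) (hΩcv : ∀ i, Convex ℝ (Ω i))
    (F : PiLp 2 (fun i : Fin N => EuclideanSpace ℝ (Fin (n i))) →
      PiLp 2 (fun i : Fin N => EuclideanSpace ℝ (Fin (n i))))
    (A : ∀ i : Fin N, EuclideanSpace ℝ (Fin (n i)) →ₗ[ℝ] EuclideanSpace ℝ (Fin m))
    (b : Fin N → EuclideanSpace ℝ (Fin m))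
    (L : Matrix (Fin N) (Fin N) ℝ)
    (hLsymm : L.IsSymm)
    (hLpsd : ∀ v : Fin N → ℝ, 0 ≤ v ⬝ᵥ L.mulVec v)
    (hLone : L.mulVec (fun _ => (1 : ℝ)) = 0)
    (hLker : ∀ v : Fin N → ℝ, L.mulVec v = 0 → ∃ c : ℝ, v = fun _ => c)
    -- `L̄ = L ⊗ I_m` acting on `ℝ^{mN}`
    (Lbar : PiLp 2 (fun _ : Fin N => EuclideanSpace ℝ (Fin m)) →
      PiLp 2 (fun _ : Fin N => EuclideanSpace ℝ (Fin m)))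
    (hLbar : ∀ lam i, Lbar lam i = ∑ j, L i j • lam j)
    -- `Λ = diag(A_1, …, A_N)` and its transpose
    (Λ : PiLp 2 (fun i : Fin N => EuclideanSpace ℝ (Fin (n i))) →
      PiLp 2 (fun _ : Fin N => EuclideanSpace ℝ (Fin m)))
    (hΛ : ∀ x i, Λ x i = A i (x i))
    (Λadj : PiLp 2 (fun _ : Fin N => EuclideanSpace ℝ (Fin m)) →
      PiLp 2 (fun i : Fin N => EuclideanSpace ℝ (Fin (n i))))
    (hΛadj : ∀ lam i, Λadj lam i = LinearMap.adjoint (A i) (lam i))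
    (bbar : PiLp 2 (fun _ : Fin N => EuclideanSpace ℝ (Fin m)))
    (hbbar : ∀ i, bbar i = b i)
    -- `Aᵀ = col(A_1ᵀ, …, A_Nᵀ)`, the transpose of `A = [A_1, …, A_N]`
    (Aadj : EuclideanSpace ℝ (Fin m) →
      PiLp 2 (fun i : Fin N => EuclideanSpace ℝ (Fin (n i))))
    (hAadj : ∀ lam i, Aadj lam i = LinearMap.adjoint (A i) lam)
    -- the operators `Ā` and `B̄`
    (Abar : PiLp 2 (fun i : Fin N => EuclideanSpace ℝ (Fin (n i))) ×
        PiLp 2 (fun _ : Fin N => EuclideanSpace ℝ (Fin m)) ×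
        PiLp 2 (fun _ : Fin N => EuclideanSpace ℝ (Fin m)) →
      PiLp 2 (fun i : Fin N => EuclideanSpace ℝ (Fin (n i))) ×
        PiLp 2 (fun _ : Fin N => EuclideanSpace ℝ (Fin m)) ×
        PiLp 2 (fun _ : Fin N => EuclideanSpace ℝ (Fin m)))
    (hAbar : ∀ p, Abar p = (F p.1, 0, Lbar p.2.2 - bbar))
    (Bbar : PiLp 2 (fun i : Fin N => EuclideanSpace ℝ (Fin (n i))) ×
        PiLp 2 (fun _ : Fin N => EuclideanSpace ℝ (Fin m)) ×
        PiLp 2 (fun _ : Fin N => EuclideanSpace ℝ (Fin m)) →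
      Set (PiLp 2 (fun i : Fin N => EuclideanSpace ℝ (Fin (n i))) ×
        PiLp 2 (fun _ : Fin N => EuclideanSpace ℝ (Fin m)) ×
        PiLp 2 (fun _ : Fin N => EuclideanSpace ℝ (Fin m))))
    (hBbar : ∀ p, Bbar p =
      (normalCone {x : PiLp 2 (fun i : Fin N => EuclideanSpace ℝ (Fin (n i))) |
            ∀ i, x i ∈ Ω i} p.1 ×ˢ
          (({0} : Set (PiLp 2 (fun _ : Fin N => EuclideanSpace ℝ (Fin m)))) ×ˢ
            normalCone {lam : PiLp 2 (fun _ : Fin N => EuclideanSpace ℝ (Fin m)) |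
              ∀ i k, 0 ≤ lam i k} p.2.2)) +
        {(-Λadj p.2.2, -Lbar p.2.2, Λ p.1 + Lbar p.2.1)})
    -- a zero of `Ā + B̄`
    (xstar : PiLp 2 (fun i : Fin N => EuclideanSpace ℝ (Fin (n i))))
    (zstar lamstar : PiLp 2 (fun _ : Fin N => EuclideanSpace ℝ (Fin m)))
    (hzero : (0 : PiLp 2 (fun i : Fin N => EuclideanSpace ℝ (Fin (n i))) ×
        PiLp 2 (fun _ : Fin N => EuclideanSpace ℝ (Fin m)) ×
        PiLp 2 (fun _ : Fin N => EuclideanSpace ℝ (Fin m))) ∈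
      ({Abar (xstar, zstar, lamstar)} : Set _) + Bbar (xstar, zstar, lamstar)) :
    ∃ lam : EuclideanSpace ℝ (Fin m),
      (∀ i, lamstar i = lam) ∧
      ((0 : PiLp 2 (fun i : Fin N => EuclideanSpace ℝ (Fin (n i)))) ∈
        ({F xstar - Aadj lam} :
          Set (PiLp 2 (fun i : Fin N => EuclideanSpace ℝ (Fin (n i))))) +
          normalCone {x : PiLp 2 (fun i : Fin N => EuclideanSpace ℝ (Fin (n i))) |
            ∀ i, x i ∈ Ω i} xstar) ∧
      ((0 : EuclideanSpace ℝ (Fin m)) ∈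
        ({(∑ i, A i (xstar i)) - ∑ i, b i} : Set (EuclideanSpace ℝ (Fin m))) +
          normalCone {v : EuclideanSpace ℝ (Fin m) | ∀ k, 0 ≤ v k} lam) := by
  classical
  rw [hBbar] at hzero
  rw [Set.mem_add] at hzero
  obtain ⟨a, ha, q, hq, hsum⟩ := hzero
  rw [Set.mem_singleton_iff] at ha
  rw [Set.mem_add] at hq
  obtain ⟨r, hr, s, hs, rfl⟩ := hq
  rw [Set.mem_singleton_iff] at hs
  subst ha hs
  obtain ⟨u, v, w⟩ := r
  obtain ⟨hu, hv, hw⟩ := hr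
  rw [Set.mem_singleton_iff] at hv
  subst hv
  rw [hAbar] at hsum
  rw [Prod.ext_iff] at hsum
  obtain ⟨eq1, hsum⟩ := hsum
  rw [Prod.ext_iff] at hsum
  obtain ⟨eq2, eq3⟩ := hsum
  simp only [Prod.fst_add, Prod.snd_add, Prod.fst_zero, Prod.snd_zero] at eq1 eq2 eq3
  -- eq1 : F xstar + u + -Λadj lamstar = 0, etc.
  have hL0 : Lbar lamstar = 0 := by
    have : (0 : PiLp 2 (fun _ : Fin N => EuclideanSpace ℝ (Fin m))) + ((0 : PiLp 2 (fun _ : Fin N => EuclideanSpace ℝ (Fin m))) + -Lbar lamstar) = 0 := eq2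
    have h2 : -Lbar lamstar = 0 := by
      calc -Lbar lamstar = 0 + (0 + -Lbar lamstar) := by abel
      _ = 0 := this
    simpa [neg_eq_zero] using h2
  have hu2 : u = Λadj lamstar - F xstar := by
    calc u = (F xstar + (u + -Λadj lamstar)) + (Λadj lamstar - F xstar) := by abel
    _ = Λadj lamstar - F xstar := by rw [eq1, zero_add]
  have hw2 : w = bbar - Λ xstar - Lbar zstar := by
    have h := eq3
    rw [hL0] at h
    calc w = (0 - bbar + (w + (Λ xstar + Lbar zstar))) + (bbar - Λ xstar - Lbar zstar) := by abel
    _ = bbar - Λ xstar - Lbar zstar := by rw [h, zero_add]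
  rcases Nat.eq_zero_or_pos N with hN | hN
  · -- degenerate case N = 0
    subst hN
    refine ⟨0, fun i => i.elim0, ?_, ?_⟩
    · rw [Set.mem_add]
      refine ⟨_, Set.mem_singleton _, -(F xstar - Aadj 0), ⟨fun i => i.elim0, ?_⟩, by abel⟩
      intro y _
      rw [PiLp.inner_apply]
      simp
    · rw [Set.mem_add]
      refine ⟨_, Set.mem_singleton _, -((∑ i, A i (xstar i)) - ∑ i, b i), ⟨?_, ?_⟩, by abel⟩
      · intro k
        simp [Finset.univ_eq_empty]
      · intro y hy
        simp [Finset.univ_eq_empty]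
  · set i0 : Fin N := ⟨0, hN⟩
    set lam : EuclideanSpace ℝ (Fin m) := lamstar i0 with hlam
    have hker : ∀ k : Fin m, L.mulVec (fun j => lamstar j k) = 0 := by
      intro k
      funext i'
      have h0 : (Lbar lamstar i') k = 0 := by rw [hL0]; rfl
      rw [hLbar] at h0
      have hs : (∑ j, L i' j • lamstar j) k = ∑ j, L i' j * lamstar j k := by
        rw [WithLp.ofLp_sum, Finset.sum_apply]
        rfl
      rw [hs] at h0
      simpa [Matrix.mulVec, dotProduct] using h0
    have hcons : ∀ i, lamstar i = lam := by
      intro i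
      refine PiLp.ext fun k => ?_
      obtain ⟨c, hc⟩ := hLker (fun j => lamstar j k) (hker k)
      exact (congrFun hc i).trans (congrFun hc i0).symm
    have hAadjeq : Aadj lam = Λadj lamstar := by
      refine PiLp.ext fun i => ?_
      rw [hAadj, hΛadj, hcons i]
    have hcolsum : ∀ j, (∑ i, L i j) = 0 := by
      intro j
      have h1 : (L.mulVec fun _ => (1:ℝ)) j = 0 := by rw [hLone]; rfl
      simp only [Matrix.mulVec, dotProduct, mul_one] at h1
      calc ∑ i, L i j = ∑ i, L j i := Finset.sum_congr rfl
            (fun i _ => Matrix.IsSymm.apply hLsymm j i)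
      _ = 0 := h1
    have hsumLbar : (∑ i, Lbar zstar i) = 0 := by
      calc ∑ i, Lbar zstar i = ∑ i, ∑ j, L i j • zstar j :=
            Finset.sum_congr rfl (fun i _ => hLbar zstar i)
      _ = ∑ j, ∑ i, L i j • zstar j := Finset.sum_comm
      _ = ∑ j, (∑ i, L i j) • zstar j := by simp [Finset.sum_smul]
      _ = 0 := by simp [hcolsum]
    have hsumw : (∑ i, w i) = (∑ i, b i) - ∑ i, A i (xstar i) := by
      calc ∑ i, w i = ∑ i, (bbar i - Λ xstar i - Lbar zstar i) :=
            Finset.sum_congr rfl (fun i _ => by rw [hw2]; rfl)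
      _ = (∑ i, bbar i) - (∑ i, Λ xstar i) - ∑ i, Lbar zstar i := by
            rw [Finset.sum_sub_distrib, Finset.sum_sub_distrib]
      _ = (∑ i, b i) - ∑ i, A i (xstar i) := by
            rw [hsumLbar, sub_zero]
            congr 1
            · exact Finset.sum_congr rfl (fun i _ => hbbar i)
            · exact Finset.sum_congr rfl (fun i _ => hΛ xstar i)
    refine ⟨lam, hcons, ?_, ?_⟩
    · rw [Set.mem_add]
      refine ⟨_, Set.mem_singleton _, -(F xstar - Aadj lam), ?_, by abel⟩
      have : -(F xstar - Aadj lam) = u := by rw [neg_sub, hAadjeq, ← hu2]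
      rw [this]
      exact hu
    · rw [Set.mem_add]
      refine ⟨_, Set.mem_singleton _, -((∑ i, A i (xstar i)) - ∑ i, b i), ?_, by abel⟩
      have hval : -((∑ i, A i (xstar i)) - ∑ i, b i) = ∑ i, w i := by
        rw [hsumw]; abel
      rw [hval]
      obtain ⟨hmem, hineq⟩ := hw
      constructor
      · intro k
        exact hmem i0 k
      · intro y hy
        let ybar : PiLp 2 (fun _ : Fin N => EuclideanSpace ℝ (Fin m)) := WithLp.toLp 2 (fun _ => y)
        have hybar : ybar ∈ {lam : PiLp 2 (fun _ : Fin N => EuclideanSpace ℝ (Fin m)) | ∀ i k, 0 ≤ lam i k} := fun i k => hy k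
        have h := hineq ybar hybar
        rw [PiLp.inner_apply] at h
        have heq : ∀ i, ⟪w i, (ybar - lamstar) i⟫ = ⟪w i, y - lam⟫ := by
          intro i
          have h3 : (ybar - lamstar) i = y - lamstar i := rfl
          rw [h3, hcons i]
        rw [Finset.sum_congr rfl (fun i _ => heq i)] at h
        rwa [← sum_inner] at h

end
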